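/- The optimal value of the covering LP — minimize Σ_{T∈𝒯} z_T subject to Σ_{T∈𝒯, T⊆S} z_T ≥ 1 for each S ∈ 𝒮 and z_T ≥ 0 — equals C(n, k+1)/C(2k, k+1), where 𝒮 = {S ⊆ V : |S| = 2k} and 𝒯 = {T ⊆ V : k+1 ≤ |T| ≤ 2k}, and in particular the integer program obtained by requiring z_T ∈ {0,1} has optimal value at least C(n, k+1)/C(2k, k+1). -/

import Mathlib

open Finset

private lemma choose_le_choose_add (m r d : ℕ) : m.choose r ≤ (m+d).choose (r+d) := by
  induction d with
  | zero => simp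
  | succ d ih =>
    calc m.choose r ≤ (m+d).choose (r+d) := ih
    _ ≤ (m+d+1).choose (r+d+1) := by
        rw [Nat.choose_succ_succ]; exact Nat.le_add_right _ _

private lemma count_supersets {V : Type*} [Fintype V] [DecidableEq V] (k : ℕ)
    (T : Finset V) (hT : T.card ≤ 2*k) :
    (univ.filter (fun S : Finset V => S.card = 2*k ∧ T ⊆ S)).card
      = (Fintype.card V - T.card).choose (2*k - T.card) := by
  rw [← Finset.card_compl T, ← Finset.card_powersetCard]
  apply Finset.card_bij' (fun S _ => S \ T) (fun U _ => U ∪ T)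
  · intro S hS
    simp only [mem_filter, mem_univ, true_and] at hS
    rw [Finset.mem_powersetCard]
    constructor
    · intro x hx
      simp only [Finset.mem_sdiff] at hx
      simp [Finset.mem_compl, hx.2]
    · rw [Finset.card_sdiff_of_subset hS.2, hS.1]
  · intro U hU
    rw [Finset.mem_powersetCard] at hU
    have hdisj : Disjoint U T := by
      rw [Finset.disjoint_right]
      intro x hxT hxU
      have := hU.1 hxU
      simp only [Finset.mem_compl] at this
      exact this hxT
    simp only [mem_filter, mem_univ, true_and]
    constructor
    · rw [Finset.card_union_of_disjoint hdisj, hU.2]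
      omega
    · exact Finset.subset_union_right
  · intro S hS
    simp only [mem_filter, mem_univ, true_and] at hS
    exact Finset.sdiff_union_of_subset hS.2
  · intro U hU
    rw [Finset.mem_powersetCard] at hU
    have hdisj : Disjoint U T := by
      rw [Finset.disjoint_right]
      intro x hxT hxU
      have := hU.1 hxU
      simp only [Finset.mem_compl] at this
      exact this hxT
    exact Finset.union_sdiff_cancel_right hdisj

theorem stmt_5 (V : Type*) [Fintype V] [DecidableEq V] (k : ℕ) (hk : 0 < k)
    (hkn : 2 * k ≤ Fintype.card V) :
    (IsLeast
      { val : ℝ | ∃ z : Finset V → ℝ,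
          (∀ T : Finset V, 0 ≤ z T) ∧
          (∀ S : Finset V, S.card = 2 * k →
            1 ≤ ∑ T ∈ Finset.univ.filter
                  (fun T : Finset V => k + 1 ≤ T.card ∧ T.card ≤ 2 * k ∧ T ⊆ S), z T) ∧
          val = ∑ T ∈ Finset.univ.filter
                  (fun T : Finset V => k + 1 ≤ T.card ∧ T.card ≤ 2 * k), z T }
      (((Fintype.card V).choose (k + 1) : ℝ) / ((2 * k).choose (k + 1) : ℝ))) ∧
    (∀ z : Finset V → ℝ, (∀ T : Finset V, z T = 0 ∨ z T = 1) →
      (∀ S : Finset V, S.card = 2 * k →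
        1 ≤ ∑ T ∈ Finset.univ.filter
              (fun T : Finset V => k + 1 ≤ T.card ∧ T.card ≤ 2 * k ∧ T ⊆ S), z T) →
      ((Fintype.card V).choose (k + 1) : ℝ) / ((2 * k).choose (k + 1) : ℝ) ≤
        ∑ T ∈ Finset.univ.filter
              (fun T : Finset V => k + 1 ≤ T.card ∧ T.card ≤ 2 * k), z T) := by
  set n := Fintype.card V with hn
  have hk1 : k + 1 ≤ 2 * k := by omega
  have hc2k : (0:ℝ) < ((2*k).choose (k+1) : ℝ) := by
    exact_mod_cast Nat.choose_pos hk1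
  -- lower bound for arbitrary feasible z
  have lower : ∀ z : Finset V → ℝ, (∀ T : Finset V, 0 ≤ z T) →
      (∀ S : Finset V, S.card = 2 * k →
        1 ≤ ∑ T ∈ Finset.univ.filter
              (fun T : Finset V => k + 1 ≤ T.card ∧ T.card ≤ 2 * k ∧ T ⊆ S), z T) →
      ((n).choose (k + 1) : ℝ) / ((2 * k).choose (k + 1) : ℝ) ≤
        ∑ T ∈ Finset.univ.filter
              (fun T : Finset V => k + 1 ≤ T.card ∧ T.card ≤ 2 * k), z T := by
    intro z hz hfeas
    set 𝒯 : Finset (Finset V) :=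
      Finset.univ.filter (fun T : Finset V => k + 1 ≤ T.card ∧ T.card ≤ 2 * k) with h𝒯
    set A : Finset (Finset V) := Finset.univ.filter (fun S : Finset V => S.card = 2*k) with hA
    have hAcard : A.card = n.choose (2*k) := by
      rw [hA]
      have : Finset.univ.filter (fun S : Finset V => S.card = 2*k)
          = Finset.powersetCard (2*k) Finset.univ := by
        ext S; simp [Finset.mem_powersetCard]
      rw [this, Finset.card_powersetCard, Finset.card_univ]
    set M : ℕ := (n - (k+1)).choose (k-1) with hM
    have hM0 : (0:ℝ) < (M:ℝ) := by
      have : k - 1 ≤ n - (k+1) := by omega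
      exact_mod_cast Nat.choose_pos this
    -- double counting
    have step1 : (n.choose (2*k) : ℝ) ≤ ∑ S ∈ A,
        ∑ T ∈ Finset.univ.filter
              (fun T : Finset V => k + 1 ≤ T.card ∧ T.card ≤ 2 * k ∧ T ⊆ S), z T := by
      rw [← hAcard]
      calc (A.card : ℝ) = ∑ S ∈ A, 1 := by simp
      _ ≤ _ := by
        apply Finset.sum_le_sum
        intro S hS
        rw [hA, mem_filter] at hS
        exact hfeas S hS.2
    have step2 : ∀ S : Finset V,
        (∑ T ∈ Finset.univ.filter
              (fun T : Finset V => k + 1 ≤ T.card ∧ T.card ≤ 2 * k ∧ T ⊆ S), z T)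
        = ∑ T ∈ 𝒯, if T ⊆ S then z T else 0 := by
      intro S
      rw [h𝒯, ← Finset.sum_filter, Finset.filter_filter]
      apply Finset.sum_congr _ (fun _ _ => rfl)
      apply Finset.filter_congr
      intro T _
      tauto
    have step3 : ∑ S ∈ A, ∑ T ∈ 𝒯, (if T ⊆ S then z T else 0)
        = ∑ T ∈ 𝒯, z T * ((n - T.card).choose (2*k - T.card) : ℝ) := by
      rw [Finset.sum_comm]
      apply Finset.sum_congr rfl
      intro T hT
      rw [h𝒯, mem_filter] at hT
      rw [← count_supersets k T hT.2.2]
      rw [Finset.sum_ite, Finset.sum_const_zero, Finset.sum_const, add_zero,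
        hA, Finset.filter_filter, nsmul_eq_mul, mul_comm]
    have step4 : ∑ T ∈ 𝒯, z T * ((n - T.card).choose (2*k - T.card) : ℝ)
        ≤ (M:ℝ) * ∑ T ∈ 𝒯, z T := by
      rw [Finset.mul_sum]
      apply Finset.sum_le_sum
      intro T hT
      rw [h𝒯, mem_filter] at hT
      obtain ⟨-, h1, h2⟩ := hT
      rw [mul_comm ((M:ℝ)) (z T)]
      apply mul_le_mul_of_nonneg_left _ (hz T)
      have key : (n - T.card).choose (2*k - T.card) ≤ M := by
        have h3 : n - (k+1) = (n - T.card) + (T.card - (k+1)) := by omega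
        have h4 : k - 1 = (2*k - T.card) + (T.card - (k+1)) := by omega
        rw [hM, h3, h4]
        exact choose_le_choose_add _ _ _
      exact_mod_cast key
    have key : (n.choose (2*k) : ℝ) ≤ (M:ℝ) * ∑ T ∈ 𝒯, z T := by
      calc (n.choose (2*k) : ℝ) ≤ _ := step1
      _ = ∑ S ∈ A, ∑ T ∈ 𝒯, (if T ⊆ S then z T else 0) :=
        Finset.sum_congr rfl (fun S _ => step2 S)
      _ ≤ _ := by rw [step3]; exact step4
    have hid : (n.choose (2*k) : ℝ) * ((2*k).choose (k+1) : ℝ)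
        = (n.choose (k+1) : ℝ) * (M:ℝ) := by
      have := Nat.choose_mul (n := n) (k := 2*k) (s := k+1) hk1
      have h5 : 2*k - (k+1) = k - 1 := by omega
      rw [h5] at this
      exact_mod_cast this
    rw [div_le_iff₀ hc2k]
    nlinarith [mul_le_mul_of_nonneg_right key hc2k.le]
  constructor
  · constructor
    · -- membership: achieving z
      refine ⟨fun T => if T.card = k+1 then (((2*k).choose (k+1) : ℝ))⁻¹ else 0, ?_, ?_, ?_⟩
      · intro T
        dsimp only; split <;> positivity
      · intro S hS
        rw [← Finset.sum_filter, Finset.filter_filter]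
        have hfil : Finset.univ.filter
            (fun T : Finset V => (k + 1 ≤ T.card ∧ T.card ≤ 2 * k ∧ T ⊆ S) ∧ T.card = k+1)
            = Finset.powersetCard (k+1) S := by
          ext T
          simp only [mem_filter, mem_univ, true_and, Finset.mem_powersetCard]
          constructor
          · rintro ⟨⟨-, -, h⟩, hc⟩; exact ⟨h, hc⟩
          · rintro ⟨h, hc⟩; exact ⟨⟨by omega, by omega, h⟩, hc⟩
        rw [hfil, Finset.sum_const, Finset.card_powersetCard, hS, nsmul_eq_mul,
          mul_inv_cancel₀ hc2k.ne']
      · rw [← Finset.sum_filter, Finset.filter_filter]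
        have hfil : Finset.univ.filter
            (fun T : Finset V => (k + 1 ≤ T.card ∧ T.card ≤ 2 * k) ∧ T.card = k+1)
            = Finset.powersetCard (k+1) Finset.univ := by
          ext T
          simp only [mem_filter, mem_univ, true_and, Finset.mem_powersetCard]
          constructor
          · rintro ⟨-, hc⟩; exact ⟨Finset.subset_univ T, hc⟩
          · rintro ⟨-, hc⟩; exact ⟨⟨by omega, by omega⟩, hc⟩
        rw [hfil, Finset.sum_const, Finset.card_powersetCard, Finset.card_univ, nsmul_eq_mul,
          div_eq_mul_inv]
    · -- lower bound
      rintro v ⟨z, hz, hfeas, rfl⟩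
      exact lower z hz hfeas
  · intro z h01 hfeas
    apply lower z _ hfeas
    intro T
    rcases h01 T with h | h <;> rw [h] <;> norm_num
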